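/- arXiv:2208.04497 — 5 statements merged into one kernel-verified Lean document; each statement's English description precedes it below -/
import Mathlib

section
/- Let N ≥ 1, let λ_1, …, λ_N be distinct complex numbers with Im λ_j > 0 for all j, let w_1, …, w_N be nonzero column vectors in ℂ², and suppose the N×N matrix Ω with entries Ω_{kj} = (w_k† w_j)/(conj(λ_k) − λ_j) is invertible. Define E(λ) = I + Σ_{k,j=1}^N w_k w_j† (Ω⁻¹)_{kj}/(λ − conj(λ_j)). Then for every λ ∈ ℂ with λ ∉ {conj(λ_1), …, conj(λ_N)}, the determinant of E(λ) is the Blaschke-type product det E(λ) = Π_{k=1}^N (λ − λ_k)/(λ − conj(λ_k)). -/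
open Matrix BigOperators

/-- The determinant of the dressing factor `E(λ)` is the Blaschke-type
product `∏_{k=1}^N (λ - λ_k)/(λ - conj(λ_k))`. -/
theorem dressing_factor_det
    (N : ℕ) (hN : 1 ≤ N)
    (lam : Fin N → ℂ) (hdist : Function.Injective lam)
    (him : ∀ j, 0 < (lam j).im)
    (w : Fin N → (Fin 2 → ℂ)) (hw : ∀ j, w j ≠ 0)
    (Ω : Matrix (Fin N) (Fin N) ℂ)
    (hΩ : ∀ k j, Ω k j = (star (w k) ⬝ᵥ w j) / ((starRingEnd ℂ) (lam k) - lam j))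
    (hΩinv : IsUnit Ω.det)
    (E : ℂ → Matrix (Fin 2) (Fin 2) ℂ)
    (hE : ∀ z : ℂ, E z =
      1 + ∑ k, ∑ j, ((Ω⁻¹ k j) / (z - (starRingEnd ℂ) (lam j))) •
        Matrix.vecMulVec (w k) (star (w j)))
    (z : ℂ) (hz : ∀ j, z ≠ (starRingEnd ℂ) (lam j)) :
    (E z).det = ∏ k, (z - lam k) / (z - (starRingEnd ℂ) (lam k)) := by
  classical
  have hden : ∀ k j, (starRingEnd ℂ) (lam k) - lam j ≠ 0 := by
    intro k j h
    have h' := congrArg Complex.im h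
    simp [Complex.sub_im, Complex.conj_im] at h'
    have := him k; have := him j
    linarith
  have hzden : ∀ j, z - (starRingEnd ℂ) (lam j) ≠ 0 := fun j => sub_ne_zero.mpr (hz j)
  set A : Matrix (Fin 2) (Fin N) ℂ := Matrix.of fun i k => w k i with hA
  set C : Matrix (Fin N) (Fin N) ℂ :=
    Matrix.of fun k j => Ω⁻¹ k j / (z - (starRingEnd ℂ) (lam j)) with hC
  have hE1 : E z = 1 + A * (C * Aᴴ) := by
    rw [hE]
    congr 1
    ext i i'
    simp only [Matrix.sum_apply, Matrix.smul_apply, Matrix.vecMulVec_apply,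
      Matrix.mul_apply, hA, hC, Matrix.of_apply, Matrix.conjTranspose_apply,
      Pi.star_apply, smul_eq_mul]
    refine Finset.sum_congr rfl fun k _ => ?_
    rw [Finset.mul_sum]
    refine Finset.sum_congr rfl fun j _ => ?_
    ring
  have hCG : C = Ω⁻¹ * Matrix.diagonal fun j => (z - (starRingEnd ℂ) (lam j))⁻¹ := by
    ext k j
    simp [hC, Matrix.mul_diagonal, div_eq_mul_inv]
  set G : Matrix (Fin N) (Fin N) ℂ := Aᴴ * A with hG
  have key : Ω + (Matrix.diagonal fun j => (z - (starRingEnd ℂ) (lam j))⁻¹) * G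
      = (Matrix.diagonal fun j => (z - (starRingEnd ℂ) (lam j))⁻¹) * Ω
        * Matrix.diagonal fun j => z - lam j := by
    ext k j
    have hGkj : G k j = Ω k j * ((starRingEnd ℂ) (lam k) - lam j) := by
      have h1 : G k j = star (w k) ⬝ᵥ w j := by
        simp [hG, Matrix.mul_apply, Matrix.conjTranspose_apply, dotProduct, hA]
      rw [h1, hΩ k j, div_mul_cancel₀ _ (hden k j)]
    rw [Matrix.add_apply, Matrix.mul_diagonal, Matrix.diagonal_mul, Matrix.diagonal_mul, hGkj]
    field_simp [hzden k]
    ring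
  have hΩΩ : Ω⁻¹ * Ω = 1 := Matrix.nonsing_inv_mul Ω hΩinv
  have hfinal : (1 : Matrix (Fin N) (Fin N) ℂ) + C * G
      = Ω⁻¹ * ((Matrix.diagonal fun j => (z - (starRingEnd ℂ) (lam j))⁻¹) * Ω
        * Matrix.diagonal fun j => z - lam j) := by
    rw [← key, Matrix.mul_add, hΩΩ, hCG, Matrix.mul_assoc]
  have hdet : (E z).det = ((1 : Matrix (Fin N) (Fin N) ℂ) + C * G).det := by
    rw [hE1, Matrix.det_one_add_mul_comm, Matrix.mul_assoc]
  rw [hdet, hfinal]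
  have hdetinv : Ω⁻¹.det * Ω.det = 1 := by
    rw [← Matrix.det_mul, hΩΩ, Matrix.det_one]
  rw [Matrix.det_mul, Matrix.det_mul, Matrix.det_mul, Matrix.det_diagonal,
    Matrix.det_diagonal]
  calc Ω⁻¹.det * ((∏ i, (z - (starRingEnd ℂ) (lam i))⁻¹) * Ω.det * ∏ i, (z - lam i))
      = (Ω⁻¹.det * Ω.det) * ((∏ i, (z - (starRingEnd ℂ) (lam i))⁻¹) * ∏ i, (z - lam i)) := by
        ring
    _ = ∏ k, (z - lam k) / (z - (starRingEnd ℂ) (lam k)) := by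
        rw [hdetinv, one_mul, ← Finset.prod_mul_distrib]
        exact Finset.prod_congr rfl fun k _ => by rw [inv_mul_eq_div]
end

section
/- Let N ≥ 1, let λ_1, …, λ_N be distinct complex numbers with Im λ_j > 0 for all j, let w_1, …, w_N be nonzero column vectors in ℂ², and suppose the N×N matrix Ω with entries Ω_{kj} = (w_k† w_j)/(conj(λ_k) − λ_j) is invertible. Define E(λ) = I + Σ_{k,j=1}^N w_k w_j† (Ω⁻¹)_{kj}/(λ − conj(λ_j)). Then for every index m ∈ {1, …, N}, the vector w_m lies in the kernel of E(λ_m): E(λ_m) w_m = 0. -/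
open Matrix BigOperators

/-- Each null vector `w_m` lies in the kernel of the dressing factor
evaluated at the corresponding discrete eigenvalue: `E(λ_m) w_m = 0`. -/
theorem dressing_factor_kernel
    (N : ℕ) (hN : 1 ≤ N)
    (lam : Fin N → ℂ) (hdist : Function.Injective lam)
    (him : ∀ j, 0 < (lam j).im)
    (w : Fin N → (Fin 2 → ℂ)) (hw : ∀ j, w j ≠ 0)
    (Ω : Matrix (Fin N) (Fin N) ℂ)
    (hΩ : ∀ k j, Ω k j = (star (w k) ⬝ᵥ w j) / ((starRingEnd ℂ) (lam k) - lam j))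
    (hΩinv : IsUnit Ω.det)
    (E : ℂ → Matrix (Fin 2) (Fin 2) ℂ)
    (hE : ∀ z : ℂ, E z =
      1 + ∑ k, ∑ j, ((Ω⁻¹ k j) / (z - (starRingEnd ℂ) (lam j))) •
        Matrix.vecMulVec (w k) (star (w j)))
    (m : Fin N) :
    (E (lam m)).mulVec (w m) = 0 := by
  have hne : ∀ j, lam m - (starRingEnd ℂ) (lam j) ≠ 0 := by
    intro j h
    have h1 : (lam m - (starRingEnd ℂ) (lam j)).im = (lam m).im + (lam j).im := by
      simp [Complex.sub_im, Complex.conj_im]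
    rw [h] at h1
    have := add_pos (him m) (him j)
    simp [← h1] at this
  have hdot : ∀ j, star (w j) ⬝ᵥ w m = Ω j m * ((starRingEnd ℂ) (lam j) - lam m) := by
    intro j
    rw [hΩ]
    have h2 : (starRingEnd ℂ) (lam j) - lam m ≠ 0 := by
      intro h
      apply hne j
      rw [sub_eq_zero] at h ⊢
      exact h.symm
    field_simp
  have hΩΩ : Ω⁻¹ * Ω = 1 := Matrix.nonsing_inv_mul Ω hΩinv
  funext i
  rw [hE]
  rw [Matrix.add_mulVec, Matrix.one_mulVec]
  have hsum : (∑ k, ∑ j, ((Ω⁻¹ k j) / (lam m - (starRingEnd ℂ) (lam j))) •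
        Matrix.vecMulVec (w k) (star (w j))).mulVec (w m) i
      = ∑ k, ∑ j, ((Ω⁻¹ k j) / (lam m - (starRingEnd ℂ) (lam j))) *
          (star (w j) ⬝ᵥ w m) * (w k i) := by
    simp only [Matrix.mulVec, dotProduct, Fin.sum_univ_two, Matrix.sum_apply,
      Matrix.smul_apply, Matrix.vecMulVec_apply, smul_eq_mul, Pi.star_apply,
      Finset.sum_mul]
    rw [← Finset.sum_add_distrib]
    refine Finset.sum_congr rfl fun k _ => ?_
    rw [← Finset.sum_add_distrib]
    refine Finset.sum_congr rfl fun j _ => ?_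
    ring
  rw [Pi.add_apply, hsum]
  have : ∀ k j, ((Ω⁻¹ k j) / (lam m - (starRingEnd ℂ) (lam j))) *
          (star (w j) ⬝ᵥ w m) * (w k i) = -(Ω⁻¹ k j * Ω j m * w k i) := by
    intro k j
    rw [hdot j]
    field_simp [hne j]
    ring
  simp only [this]
  have h3 : ∑ k, ∑ j, -(Ω⁻¹ k j * Ω j m * w k i) = -∑ k, ((Ω⁻¹ * Ω) k m) * w k i := by
    simp [Matrix.mul_apply, Finset.sum_mul, Finset.sum_neg_distrib]
  rw [h3, hΩΩ]
  simp [Matrix.one_apply, Finset.sum_ite_eq]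
end

section
/- Let u : ℝ → ℝ be continuously differentiable, let λ ∈ ℂ, and let v₁, v₂ : ℝ → ℂ be differentiable functions satisfying the Zakharov–Shabat system v₁′(x) = iλ v₁(x) + u(x) v₂(x), v₂′(x) = −u(x) v₁(x) − iλ v₂(x). Set φ(x) = v₁(x)² + v₂(x)². Assume that (i) 2iλ v₁(x)v₂(x) + u(x)φ(x) → 0 as x → +∞, and (ii) for every x ∈ ℝ the function y ↦ u′(y)φ(y) is integrable on [x, ∞). Then φ is twice differentiable and for every x ∈ ℝ, −φ″(x) − 4u(x)²φ(x) − 4u(x) ∫_x^∞ u′(y)φ(y) dy = 4λ² φ(x); that is, φ is an eigenfunction of the operator L = −∂² − 4u² − 4u ∂₊⁻¹ u_y with eigenvalue 4λ². -/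
open MeasureTheory Filter

/-- The square `φ = v₁² + v₂²` of a Zakharov–Shabat eigenfunction
is an eigenfunction of the squared-eigenfunction operator
`L = -∂² - 4u² - 4u ∂₊⁻¹ u_y` with eigenvalue `4λ²`. -/
theorem squared_eigenfunction
    (u : ℝ → ℝ) (hu : ContDiff ℝ 1 u)
    (lam : ℂ)
    (v₁ v₂ : ℝ → ℂ) (hv₁ : Differentiable ℝ v₁) (hv₂ : Differentiable ℝ v₂)
    (heq₁ : ∀ x, deriv v₁ x = Complex.I * lam * v₁ x + (u x : ℂ) * v₂ x)
    (heq₂ : ∀ x, deriv v₂ x = -(u x : ℂ) * v₁ x - Complex.I * lam * v₂ x)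
    (φ : ℝ → ℂ) (hφ : ∀ x, φ x = (v₁ x) ^ 2 + (v₂ x) ^ 2)
    (hdecay : Tendsto (fun x => 2 * Complex.I * lam * v₁ x * v₂ x + (u x : ℂ) * φ x)
      atTop (nhds 0))
    (hint : ∀ x : ℝ, IntegrableOn (fun y => ((deriv u y : ℝ) : ℂ) * φ y) (Set.Ici x)) :
    Differentiable ℝ φ ∧ Differentiable ℝ (deriv φ) ∧
    ∀ x : ℝ,
      -(deriv (deriv φ) x) - 4 * (u x : ℂ) ^ 2 * φ x
        - 4 * (u x : ℂ) * ∫ y in Set.Ici x, ((deriv u y : ℝ) : ℂ) * φ y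
      = 4 * lam ^ 2 * φ x := by
  have hud : Differentiable ℝ u := hu.differentiable one_ne_zero
  have h1 : ∀ x, HasDerivAt v₁ (Complex.I * lam * v₁ x + (u x : ℂ) * v₂ x) x := by
    intro x; rw [← heq₁ x]; exact (hv₁ x).hasDerivAt
  have h2 : ∀ x, HasDerivAt v₂ (-(u x : ℂ) * v₁ x - Complex.I * lam * v₂ x) x := by
    intro x; rw [← heq₂ x]; exact (hv₂ x).hasDerivAt
  have φeq : φ = fun x => v₁ x ^ 2 + v₂ x ^ 2 := funext hφ
  -- first derivative of φ
  have hφd : ∀ x, HasDerivAt φ (2 * Complex.I * lam * (v₁ x ^ 2 - v₂ x ^ 2)) x := by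
    intro x
    have H := (((h1 x).fun_mul (h1 x)).fun_add ((h2 x).fun_mul (h2 x)))
    simp only [← pow_two] at H
    rw [φeq]
    refine H.congr_deriv ?_
    ring
  have hφdiff : Differentiable ℝ φ := fun x => (hφd x).differentiableAt
  have hderivφ : deriv φ = fun x => 2 * Complex.I * lam * (v₁ x ^ 2 - v₂ x ^ 2) :=
    funext fun x => (hφd x).deriv
  -- second derivative of φ
  have hφdd : ∀ x, HasDerivAt (deriv φ)
      (-4 * lam ^ 2 * φ x + 8 * Complex.I * lam * (u x : ℂ) * (v₁ x * v₂ x)) x := by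
    intro x
    have H := ((((h1 x).fun_mul (h1 x)).fun_sub ((h2 x).fun_mul (h2 x))).const_mul (2 * Complex.I * lam))
    simp only [← pow_two] at H
    rw [hderivφ]
    refine H.congr_deriv ?_
    rw [hφ x]
    have hI : Complex.I * Complex.I = -1 := Complex.I_mul_I
    ring_nf
    rw [Complex.I_sq]
    ring
  have hφddiff : Differentiable ℝ (deriv φ) := fun x => (hφdd x).differentiableAt
  refine ⟨hφdiff, hφddiff, fun x => ?_⟩
  -- the boundary function g
  set g : ℝ → ℂ := fun x => 2 * Complex.I * lam * v₁ x * v₂ x + (u x : ℂ) * φ x with hg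
  have hgd : ∀ x, HasDerivAt g (((deriv u x : ℝ) : ℂ) * φ x) x := by
    intro x
    have hucd : HasDerivAt (fun y => ((u y : ℝ) : ℂ)) ((deriv u x : ℝ) : ℂ) x :=
      (hud x).hasDerivAt.ofReal_comp
    have H := ((((h1 x).fun_mul (h2 x)).const_mul (2 * Complex.I * lam)).fun_add
      (hucd.fun_mul (hφd x)))
    have Hφ : HasDerivAt g
        (2 * Complex.I * lam * ((Complex.I * lam * v₁ x + (u x : ℂ) * v₂ x) * v₂ x
          + v₁ x * (-(u x : ℂ) * v₁ x - Complex.I * lam * v₂ x))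
         + (((deriv u x : ℝ) : ℂ) * φ x
            + ((u x : ℂ)) * (2 * Complex.I * lam * (v₁ x ^ 2 - v₂ x ^ 2)))) x := by
      rw [hg]
      refine (H.congr_deriv ?_).congr_of_eventuallyEq
        (Filter.Eventually.of_forall fun y => by simp only [mul_assoc])
      ring
    convert Hφ using 1
    ring
  -- integral identity
  have hkey : (∫ y in Set.Ici x, ((deriv u y : ℝ) : ℂ) * φ y) = -g x := by
    rw [MeasureTheory.integral_Ici_eq_integral_Ioi]
    have := MeasureTheory.integral_Ioi_of_hasDerivAt_of_tendsto
      (f := g) (f' := fun y => ((deriv u y : ℝ) : ℂ) * φ y) (a := x)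
      ((hgd x).continuousAt.continuousWithinAt)
      (fun y _ => hgd y)
      ((hint x).mono_set Set.Ioi_subset_Ici_self)
      hdecay
    rw [this]; simp
  rw [hkey, (hφdd x).deriv]
  simp only [hg, hφ x]
  ring
end

section
/- Let u : ℝ → ℝ be five times continuously differentiable with u(x), u′(x), u″(x) → 0 as x → −∞, and assume that for every x ∈ ℝ the function y ↦ u(y)·(u‴(y) + 6u(y)²u′(y)) is integrable on (−∞, x]. Set g = u‴ + 6u²u′. Then for every x ∈ ℝ, g″(x) + 4u(x)²g(x) + 4u′(x) ∫_{−∞}^x u(y) g(y) dy = u⁽⁵⁾(x) + 10·(u²u″ + u(u′)²)′(x) + 30u(x)⁴u′(x); that is, L̂²u_x = ∂_x K₅[u] where ∂_x K₅[u] = u_xxxxx + 10(u²u_xx + u u_x²)_x + 30u⁴u_x. -/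
open MeasureTheory Filter

/-- The recursion operator identity `L̂² u_x = ∂_x K₅[u]`: with
`g = u''' + 6u²u'`, one has
`g'' + 4u²g + 4u' ∫_{-∞}^x u g = u⁽⁵⁾ + 10(u²u'' + u(u')²)' + 30u⁴u'`. -/
theorem recursion_operator_K5
    (u : ℝ → ℝ) (hu : ContDiff ℝ 5 u)
    (hdecay₀ : Tendsto u atBot (nhds 0))
    (hdecay₁ : Tendsto (deriv u) atBot (nhds 0))
    (hdecay₂ : Tendsto (iteratedDeriv 2 u) atBot (nhds 0))
    (g : ℝ → ℝ)
    (hg : ∀ x, g x = iteratedDeriv 3 u x + 6 * (u x) ^ 2 * deriv u x)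
    (hint : ∀ x : ℝ, IntegrableOn (fun y => u y * g y) (Set.Iic x)) :
    ∀ x : ℝ,
      deriv (deriv g) x + 4 * (u x) ^ 2 * g x
        + 4 * deriv u x * ∫ y in Set.Iic x, u y * g y
      = iteratedDeriv 5 u x
        + 10 * deriv (fun z => (u z) ^ 2 * iteratedDeriv 2 u z + u z * (deriv u z) ^ 2) x
        + 30 * (u x) ^ 4 * deriv u x := by
  -- basic derivative facts
  have hder : ∀ k : ℕ, k < 5 → ∀ x : ℝ,
      HasDerivAt (iteratedDeriv k u) (iteratedDeriv (k + 1) u x) x := by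
    intro k hk x
    have hdif : Differentiable ℝ (iteratedDeriv k u) :=
      hu.differentiable_iteratedDeriv k (by exact_mod_cast hk)
    have := (hdif x).hasDerivAt
    rwa [iteratedDeriv_succ]
  have h0 : ∀ x : ℝ, HasDerivAt u (deriv u x) x := by
    intro x
    have := hder 0 (by norm_num) x
    simpa [iteratedDeriv_one, iteratedDeriv_zero] using this
  have h1 : ∀ x : ℝ, HasDerivAt (deriv u) (iteratedDeriv 2 u x) x := by
    intro x
    have := hder 1 (by norm_num) x
    simpa [iteratedDeriv_one] using this
  have h2 : ∀ x : ℝ, HasDerivAt (iteratedDeriv 2 u) (iteratedDeriv 3 u x) x :=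
    fun x => hder 2 (by norm_num) x
  have h3 : ∀ x : ℝ, HasDerivAt (iteratedDeriv 3 u) (iteratedDeriv 4 u x) x :=
    fun x => hder 3 (by norm_num) x
  have h4 : ∀ x : ℝ, HasDerivAt (iteratedDeriv 4 u) (iteratedDeriv 5 u x) x :=
    fun x => hder 4 (by norm_num) x
  have hgeq : g = fun x => iteratedDeriv 3 u x + 6 * (u x) ^ 2 * deriv u x := funext hg
  -- first derivative of g
  have hg' : ∀ x : ℝ, HasDerivAt g
      (iteratedDeriv 4 u x + (12 * u x * deriv u x * deriv u x
        + 6 * (u x) ^ 2 * iteratedDeriv 2 u x)) x := by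
    intro x
    rw [hgeq]
    have : HasDerivAt (fun x => iteratedDeriv 3 u x + 6 * (u x) ^ 2 * deriv u x)
        (iteratedDeriv 4 u x + ((6 * (2 * u x * deriv u x)) * deriv u x
          + 6 * (u x) ^ 2 * iteratedDeriv 2 u x)) x :=
      (h3 x).add ((((hasDerivAt_const x (6:ℝ)).mul ((h0 x).pow 2)).mul (h1 x)).congr_deriv
        (by simp only [Pi.mul_apply, Pi.pow_apply]; ring))
    exact this.congr_deriv (by ring)
  have hgd : deriv g = fun x => iteratedDeriv 4 u x + (12 * u x * deriv u x * deriv u x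
      + 6 * (u x) ^ 2 * iteratedDeriv 2 u x) := funext fun x => (hg' x).deriv
  -- second derivative of g
  have hg'' : ∀ x : ℝ, deriv (deriv g) x
      = iteratedDeriv 5 u x + 12 * (deriv u x) ^ 3
        + 36 * u x * deriv u x * iteratedDeriv 2 u x
        + 6 * (u x) ^ 2 * iteratedDeriv 3 u x := by
    intro x
    rw [hgd]
    have H : HasDerivAt (fun x => iteratedDeriv 4 u x + (12 * u x * deriv u x * deriv u x
        + 6 * (u x) ^ 2 * iteratedDeriv 2 u x))
        (iteratedDeriv 5 u x + 12 * (deriv u x) ^ 3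
          + 36 * u x * deriv u x * iteratedDeriv 2 u x
          + 6 * (u x) ^ 2 * iteratedDeriv 3 u x) x := by
      have ha : HasDerivAt (fun x => 12 * u x * deriv u x * deriv u x)
          ((12 * deriv u x * deriv u x + 12 * u x * iteratedDeriv 2 u x) * deriv u x
            + 12 * u x * deriv u x * iteratedDeriv 2 u x) x :=
        (((hasDerivAt_const x (12:ℝ)).mul (h0 x)).mul (h1 x)).mul (h1 x) |>.congr_deriv
          (by simp only [Pi.mul_apply, Pi.pow_apply]; ring)
      have hb : HasDerivAt (fun x => 6 * (u x) ^ 2 * iteratedDeriv 2 u x)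
          ((6 * (2 * u x * deriv u x)) * iteratedDeriv 2 u x
            + 6 * (u x) ^ 2 * iteratedDeriv 3 u x) x :=
        ((hasDerivAt_const x (6:ℝ)).mul ((h0 x).pow 2)).mul (h2 x) |>.congr_deriv (by simp only [Pi.mul_apply, Pi.pow_apply]; ring)
      exact ((h4 x).add (ha.add hb)).congr_deriv (by ring)
    exact H.deriv
  -- the integral
  intro x
  set F : ℝ → ℝ := fun y => u y * iteratedDeriv 2 u y - (deriv u y) ^ 2 / 2
    + (3 / 2) * (u y) ^ 4 with hF
  have hF' : ∀ y : ℝ, HasDerivAt F (u y * g y) y := by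
    intro y
    rw [hF]
    refine ((((h0 y).mul (h2 y)).sub (((h1 y).pow 2).div_const 2)).add
      ((hasDerivAt_const y ((3:ℝ)/2)).mul ((h0 y).pow 4))).congr_deriv ?_
    rw [hg y]; push_cast; ring
  have hFlim : Tendsto F atBot (nhds 0) := by
    have t1 : Tendsto (fun y => u y * iteratedDeriv 2 u y) atBot (nhds 0) := by
      simpa using hdecay₀.mul hdecay₂
    have t2 : Tendsto (fun y => (deriv u y) ^ 2 / 2) atBot (nhds 0) := by
      simpa using (hdecay₁.pow 2).div_const 2
    have t3 : Tendsto (fun y => (3 / 2 : ℝ) * (u y) ^ 4) atBot (nhds 0) := by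
      simpa using (hdecay₀.pow 4).const_mul ((3:ℝ)/2)
    simpa using (t1.sub t2).add t3
  have hint' : ∫ y in Set.Iic x, u y * g y = F x := by
    rw [integral_Iic_of_hasDerivAt_of_tendsto' (fun y _ => hF' y) (hint x) hFlim, sub_zero]
  -- derivative on the RHS
  have hrhs : deriv (fun z => (u z) ^ 2 * iteratedDeriv 2 u z + u z * (deriv u z) ^ 2) x
      = 2 * u x * deriv u x * iteratedDeriv 2 u x + (u x) ^ 2 * iteratedDeriv 3 u x
        + (deriv u x) ^ 3 + 2 * u x * deriv u x * iteratedDeriv 2 u x := by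
    have H : HasDerivAt (fun z => (u z) ^ 2 * iteratedDeriv 2 u z + u z * (deriv u z) ^ 2)
        (2 * u x * deriv u x * iteratedDeriv 2 u x + (u x) ^ 2 * iteratedDeriv 3 u x
          + (deriv u x) ^ 3 + 2 * u x * deriv u x * iteratedDeriv 2 u x) x := by
      have ha : HasDerivAt (fun z => (u z) ^ 2 * iteratedDeriv 2 u z)
          ((2 * u x * deriv u x) * iteratedDeriv 2 u x + (u x) ^ 2 * iteratedDeriv 3 u x) x :=
        (((h0 x).pow 2).mul (h2 x)).congr_deriv (by simp only [Pi.mul_apply, Pi.pow_apply]; ring)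
      have hb : HasDerivAt (fun z => u z * (deriv u z) ^ 2)
          (deriv u x * (deriv u x) ^ 2 + u x * (2 * deriv u x * iteratedDeriv 2 u x)) x :=
        ((h0 x).mul ((h1 x).pow 2)).congr_deriv (by simp only [Pi.mul_apply, Pi.pow_apply]; ring)
      exact (ha.add hb).congr_deriv (by ring)
    exact H.deriv
  rw [hg'' x, hg x, hint', hrhs, hF]
  ring
end

section
/- Let u : ℝ → ℝ be seven times continuously differentiable with u(x) and its derivatives up to fourth order tending to 0 as x → −∞, and assume that for every x ∈ ℝ the function y ↦ u(y)·(∂_yK₅[u])(y) is integrable on (−∞, x], where ∂_xK₅[u] = u_xxxxx + 10(u²u_xx + u u_x²)_x + 30u⁴u_x. Set g = ∂_xK₅[u]. Then for every x ∈ ℝ, g″(x) + 4u(x)²g(x) + 4u′(x) ∫_{−∞}^x u(y) g(y) dy = ∂_x K₇[u](x), where K₇[u] = u_{6x} + 14(u²u_{4x} + 4u u_x u_xxx + 3u u_xx² + 5u_x²u_xx + 5u⁴u_xx + 10u³u_x²) + 20u⁷; that is, (−L̂)(∂_x K₅[u]) = ∂_x K₇[u], so −L̂³u_x = ∂_x K₇[u].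 -/
open MeasureTheory Filter

/-- The recursion operator identity `(-L̂)(∂_x K₅[u]) = ∂_x K₇[u]`:
with `g = ∂_x K₅[u] = u⁽⁵⁾ + 10(u²u'' + u(u')²)' + 30u⁴u'`, one has
`g'' + 4u²g + 4u' ∫_{-∞}^x u g = ∂_x K₇[u]`, where
`K₇[u] = u⁽⁶⁾ + 14(u²u⁽⁴⁾ + 4uu'u''' + 3u(u'')² + 5(u')²u'' + 5u⁴u'' + 10u³(u')²) + 20u⁷`. -/
theorem recursion_operator_K7
    (u : ℝ → ℝ) (hu : ContDiff ℝ 7 u)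
    (hdecay : ∀ k : ℕ, k ≤ 4 → Tendsto (iteratedDeriv k u) atBot (nhds 0))
    (g : ℝ → ℝ)
    (hg : ∀ x, g x = iteratedDeriv 5 u x
      + 10 * deriv (fun z => (u z) ^ 2 * iteratedDeriv 2 u z + u z * (deriv u z) ^ 2) x
      + 30 * (u x) ^ 4 * deriv u x)
    (hint : ∀ x : ℝ, IntegrableOn (fun y => u y * g y) (Set.Iic x))
    (K₇ : ℝ → ℝ)
    (hK₇ : ∀ x, K₇ x = iteratedDeriv 6 u x
      + 14 * ((u x) ^ 2 * iteratedDeriv 4 u x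
        + 4 * u x * deriv u x * iteratedDeriv 3 u x
        + 3 * u x * (iteratedDeriv 2 u x) ^ 2
        + 5 * (deriv u x) ^ 2 * iteratedDeriv 2 u x
        + 5 * (u x) ^ 4 * iteratedDeriv 2 u x
        + 10 * (u x) ^ 3 * (deriv u x) ^ 2)
      + 20 * (u x) ^ 7) :
    ∀ x : ℝ,
      deriv (deriv g) x + 4 * (u x) ^ 2 * g x
        + 4 * deriv u x * ∫ y in Set.Iic x, u y * g y
      = deriv K₇ x := by
  -- basic derivative facts
  have hD : ∀ k : ℕ, k ≤ 6 → ∀ x : ℝ,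
      HasDerivAt (iteratedDeriv k u) (iteratedDeriv (k+1) u x) x := by
    intro k hk x
    have hdiff : Differentiable ℝ (iteratedDeriv k u) := by
      apply hu.differentiable_iteratedDeriv
      exact_mod_cast Nat.lt_succ_of_le hk
    rw [iteratedDeriv_succ]
    exact (hdiff x).hasDerivAt
  have h0 : ∀ x : ℝ, HasDerivAt u (deriv u x) x := by
    intro x
    have := hD 0 (by norm_num) x
    simpa [iteratedDeriv_zero, iteratedDeriv_one] using this
  have h1 : ∀ x : ℝ, HasDerivAt (deriv u) (iteratedDeriv 2 u x) x := by
    intro x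
    have := hD 1 (by norm_num) x
    rwa [iteratedDeriv_one] at this
  have h2 := fun x => hD 2 (by norm_num) x
  have h3 := fun x => hD 3 (by norm_num) x
  have h4 := fun x => hD 4 (by norm_num) x
  have h5 := fun x => hD 5 (by norm_num) x
  have h6 := fun x => hD 6 (by norm_num) x
  -- notation
  set u2 := iteratedDeriv 2 u with hu2
  set u3 := iteratedDeriv 3 u with hu3
  set u4 := iteratedDeriv 4 u with hu4
  set u5 := iteratedDeriv 5 u with hu5
  set u6 := iteratedDeriv 6 u with hu6
  set u7 := iteratedDeriv 7 u with hu7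
  -- expanded formula for g
  have hgG : ∀ x : ℝ, g x = u5 x + 10 * (u x)^2 * u3 x + 40 * u x * deriv u x * u2 x
      + 10 * (deriv u x)^3 + 30 * (u x)^4 * deriv u x := by
    intro x
    have hP : HasDerivAt (fun z => (u z) ^ 2 * iteratedDeriv 2 u z + u z * (deriv u z) ^ 2)
        _ x := (((h0 x).pow 2).mul (h2 x)).add ((h0 x).mul ((h1 x).pow 2))
    rw [hg x, hP.deriv]
    push_cast
    simp only [Pi.add_apply, Pi.sub_apply, Pi.mul_apply, Pi.pow_apply, Pi.div_apply]
    ring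
  -- deriv g
  have hG1 : ∀ x : ℝ, HasDerivAt g
      (u6 x + 10*(u x)^2*u4 x + 60*u x*deriv u x*u3 x + 70*(deriv u x)^2*u2 x
        + 40*u x*(u2 x)^2 + 120*(u x)^3*(deriv u x)^2 + 30*(u x)^4*u2 x) x := by
    intro x
    have T := ((((h5 x).add ((((h0 x).pow 2).mul (h3 x)).const_mul 10)).add
        ((((h0 x).const_mul 40).mul (h1 x)).mul (h2 x))).add
        (((h1 x).pow 3).const_mul 10)).add ((((h0 x).pow 4).const_mul 30).mul (h1 x))
    have T' : HasDerivAt g _ x := T.congr_of_eventuallyEq (by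
      filter_upwards with z
      rw [hgG z]; simp only [Pi.add_apply, Pi.sub_apply, Pi.mul_apply, Pi.pow_apply, Pi.div_apply]; ring)
    convert T' using 1
    push_cast
    simp only [Pi.add_apply, Pi.sub_apply, Pi.mul_apply, Pi.pow_apply, Pi.div_apply]
    ring
  have hg1 : deriv g = fun x => u6 x + 10*(u x)^2*u4 x + 60*u x*deriv u x*u3 x
      + 70*(deriv u x)^2*u2 x + 40*u x*(u2 x)^2 + 120*(u x)^3*(deriv u x)^2
      + 30*(u x)^4*u2 x := funext fun x => (hG1 x).deriv
  -- second derivative of g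
  have hG2 : ∀ x : ℝ, HasDerivAt (deriv g)
      (u7 x + 10*(u x)^2*u5 x + 80*u x*deriv u x*u4 x + 130*(deriv u x)^2*u3 x
        + 140*u x*u2 x*u3 x + 180*deriv u x*(u2 x)^2 + 360*(u x)^2*(deriv u x)^3
        + 360*(u x)^3*deriv u x*u2 x + 30*(u x)^4*u3 x) x := by
    intro x
    have T := ((((((h6 x).add ((((h0 x).pow 2).mul (h4 x)).const_mul 10)).add
        ((((h0 x).const_mul 60).mul (h1 x)).mul (h3 x))).add
        ((((h1 x).pow 2).const_mul 70).mul (h2 x))).add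
        (((h0 x).const_mul 40).mul ((h2 x).pow 2))).add
        ((((h0 x).pow 3).const_mul 120).mul ((h1 x).pow 2))).add
        ((((h0 x).pow 4).const_mul 30).mul (h2 x))
    have T' : HasDerivAt (deriv g) _ x := T.congr_of_eventuallyEq (by
      filter_upwards with z
      rw [hg1]; simp only [Pi.add_apply, Pi.sub_apply, Pi.mul_apply, Pi.pow_apply, Pi.div_apply]; ring)
    convert T' using 1
    push_cast
    simp only [Pi.add_apply, Pi.sub_apply, Pi.mul_apply, Pi.pow_apply, Pi.div_apply]
    ring
  -- antiderivative of u*g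
  set F : ℝ → ℝ := fun x => u x * u4 x - deriv u x * u3 x + (u2 x)^2/2
      + 10*(u x)^3*u2 x + 5*(u x)^2*(deriv u x)^2 + 5*(u x)^6 with hF
  have hFd : ∀ y : ℝ, HasDerivAt F (u y * g y) y := by
    intro y
    have T := ((((((h0 y).mul (h4 y)).sub ((h1 y).mul (h3 y))).add
        (((h2 y).pow 2).div_const 2)).add
        ((((h0 y).pow 3).const_mul 10).mul (h2 y))).add
        ((((h0 y).pow 2).const_mul 5).mul ((h1 y).pow 2))).add
        (((h0 y).pow 6).const_mul 5)
    have T' : HasDerivAt F _ y := T.congr_of_eventuallyEq (by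
      filter_upwards with z
      simp only [hF, Pi.add_apply, Pi.sub_apply, Pi.mul_apply, Pi.pow_apply, Pi.div_apply])
    convert T' using 1
    rw [hgG y]
    push_cast
    simp only [Pi.add_apply, Pi.sub_apply, Pi.mul_apply, Pi.pow_apply, Pi.div_apply]
    ring
  have hFlim : Tendsto F atBot (nhds 0) := by
    have t0 : Tendsto u atBot (nhds 0) := by
      simpa [iteratedDeriv_zero] using hdecay 0 (by norm_num)
    have t1 : Tendsto (deriv u) atBot (nhds 0) := by
      have := hdecay 1 (by norm_num); rwa [iteratedDeriv_one] at this
    have t2 : Tendsto u2 atBot (nhds 0) := hdecay 2 (by norm_num)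
    have t3 : Tendsto u3 atBot (nhds 0) := hdecay 3 (by norm_num)
    have t4 : Tendsto u4 atBot (nhds 0) := hdecay 4 (by norm_num)
    have H := (((((t0.mul t4).sub (t1.mul t3)).add ((t2.pow 2).div_const 2)).add
        (((t0.pow 3).const_mul 10).mul t2)).add
        (((t0.pow 2).const_mul 5).mul (t1.pow 2))).add ((t0.pow 6).const_mul 5)
    norm_num at H
    exact H
  intro x
  have hInt : (∫ y in Set.Iic x, u y * g y) = F x - 0 :=
    integral_Iic_of_hasDerivAt_of_tendsto' (fun y _ => hFd y) (hint x) hFlim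
  -- deriv K₇
  have hK7d : HasDerivAt K₇
      (u7 x + 14*((u x)^2*u5 x + 6*u x*deriv u x*u4 x + 9*(deriv u x)^2*u3 x
        + 10*u x*u2 x*u3 x + 13*deriv u x*(u2 x)^2 + 40*(u x)^3*deriv u x*u2 x
        + 5*(u x)^4*u3 x + 30*(u x)^2*(deriv u x)^3) + 140*(u x)^6*deriv u x) x := by
    have T := ((h6 x).add (HasDerivAt.const_mul 14
        ((((((((h0 x).pow 2).mul (h4 x)).add
          ((((h0 x).const_mul 4).mul (h1 x)).mul (h3 x))).add
          (((h0 x).const_mul 3).mul ((h2 x).pow 2))).add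
          ((((h1 x).pow 2).const_mul 5).mul (h2 x))).add
          ((((h0 x).pow 4).const_mul 5).mul (h2 x))).add
          ((((h0 x).pow 3).const_mul 10).mul ((h1 x).pow 2))))).add
        (((h0 x).pow 7).const_mul 20)
    have T' : HasDerivAt K₇ _ x := T.congr_of_eventuallyEq (by
      filter_upwards with z
      rw [hK₇ z]; simp only [Pi.add_apply, Pi.sub_apply, Pi.mul_apply, Pi.pow_apply, Pi.div_apply])
    convert T' using 1
    push_cast
    simp only [Pi.add_apply, Pi.sub_apply, Pi.mul_apply, Pi.pow_apply, Pi.div_apply]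
    ring
  rw [(hG2 x).deriv, hK7d.deriv, hgG x, hInt]
  ring
end
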